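/- Let $f\colon C([0,T],\mathbb R)\to\mathbb R$ be twice continuously Fréchet differentiable with derivatives of polynomial growth. Let $Y_T$ and $\tilde X_T$ be $C([0,T],\mathbb R)$-valued random variables with moments of all orders (in the uniform norm) such that the difference $\tilde X_T-Y_T$ is independent of $Y_T$, has mean zero in $C([0,T],\mathbb R)$, and satisfies $\mathbb E\|\tilde X_T-Y_T\|_\infty^4\leq K\delta^2$ for some constants $K$ and $\delta\in(0,1]$. Then $|\mathbb E(f(Y_T)-f(\tilde X_T))|\leq C\delta$ for a constant $C$ depending on $f$, $K$, and the moments of $Y_T$ and $\tilde X_T$, but not on $\delta$. -/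

import Mathlib

open MeasureTheory Set ProbabilityTheory
open scoped ENNReal NNReal

set_option linter.unusedSectionVars false

section Aux
variable {E : Type*} [NormedAddCommGroup E] [NormedSpace ℝ E]

lemma aux_self_le {a r : ℝ} (ha : 0 ≤ a) (hr : 1 ≤ r) : a ≤ 1 + a ^ r := by
  rcases le_total a 1 with h | h
  · have : (0:ℝ) ≤ a ^ r := Real.rpow_nonneg ha r
    linarith
  · have : a ^ (1:ℝ) ≤ a ^ r := Real.rpow_le_rpow_of_exponent_le h hr
    rw [Real.rpow_one] at this
    linarith

lemma aux_prod_le {a b t : ℝ} (ha : 0 ≤ a) (hb : 0 ≤ b) (ht : 0 ≤ t) :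
    a ^ t * b ≤ a ^ (t + 1) + b ^ (t + 1) := by
  have hne : t + 1 ≠ 0 := by linarith
  rcases le_total a b with h | h
  · have h1 : a ^ t ≤ b ^ t := Real.rpow_le_rpow ha h ht
    have h2 : b ^ t * b = b ^ (t + 1) := by
      rw [Real.rpow_add' hb hne, Real.rpow_one]
    have : a ^ t * b ≤ b ^ t * b := mul_le_mul_of_nonneg_right h1 hb
    have h3 : (0:ℝ) ≤ a ^ (t+1) := Real.rpow_nonneg ha _
    linarith [h2 ▸ this]
  · have h2 : a ^ t * a = a ^ (t + 1) := by
      rw [Real.rpow_add' ha hne, Real.rpow_one]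
    have : a ^ t * b ≤ a ^ t * a :=
      mul_le_mul_of_nonneg_left h (Real.rpow_nonneg ha t)
    have h3 : (0:ℝ) ≤ b ^ (t+1) := Real.rpow_nonneg hb _
    linarith [h2 ▸ this]

lemma aux_bounded_of_decay {g : E → ℝ} (hg : Continuous g) {c q : ℝ} (hq : q < 0)
    (hb : ∀ x, g x ≤ c * (1 + ‖x‖ ^ q)) : ∃ D : ℝ, ∀ x, g x ≤ D := by
  obtain ⟨ε, hε, hball⟩ := Metric.continuousAt_iff.1 (hg.continuousAt (x := 0)) 1 one_pos
  refine ⟨max (g 0 + 1) (max c 0 * (1 + ε ^ q)), fun x => ?_⟩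
  rcases lt_or_ge ‖x‖ ε with h | h
  · have := hball (by simpa [dist_eq_norm] using h)
    rw [Real.dist_eq] at this
    have := abs_lt.1 this
    exact le_max_of_le_left (by linarith [this.1, this.2])
  · refine le_max_of_le_right ?_
    calc g x ≤ c * (1 + ‖x‖ ^ q) := hb x
      _ ≤ max c 0 * (1 + ‖x‖ ^ q) := by
          have : (0:ℝ) ≤ 1 + ‖x‖ ^ q := by positivity
          exact mul_le_mul_of_nonneg_right (le_max_left _ _) this
      _ ≤ max c 0 * (1 + ε ^ q) := by
          have : ‖x‖ ^ q ≤ ε ^ q := Real.rpow_le_rpow_of_nonpos hε h hq.le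
          have h0 : (0:ℝ) ≤ max c 0 := le_max_right _ _
          nlinarith

lemma aux_growth {f : E → ℝ} (hf : ContDiff ℝ 2 f) {Cf qf : ℝ}
    (hgrowth : ∀ i : ℕ, i ≤ 2 → ∀ x, ‖iteratedFDeriv ℝ i f x‖ ≤ Cf * (1 + ‖x‖ ^ qf)) :
    ∃ B q : ℝ, 0 ≤ B ∧ 1 ≤ q ∧ ∀ i : ℕ, i ≤ 2 → ∀ x,
      ‖iteratedFDeriv ℝ i f x‖ ≤ B * (1 + ‖x‖ ^ q) := by
  rcases lt_or_ge qf 0 with hqf | hqf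
  · have hcont : ∀ i : ℕ, i ≤ 2 → Continuous (fun x : E => ‖iteratedFDeriv ℝ i f x‖) := by
      intro i hi
      exact (hf.continuous_iteratedFDeriv (by exact_mod_cast hi)).norm
    choose D hD using fun i (hi : i ≤ 2) =>
      aux_bounded_of_decay (hcont i hi) hqf (hgrowth i hi)
    set D' : ℝ := max (max (D 0 (by norm_num)) (D 1 (by norm_num))) (D 2 (by norm_num))
    refine ⟨max D' 0, 1, le_max_right _ _, le_refl 1, fun i hi x => ?_⟩
    have h1 : (0:ℝ) ≤ ‖x‖ ^ (1:ℝ) := Real.rpow_nonneg (norm_nonneg _) _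
    have hDi : ‖iteratedFDeriv ℝ i f x‖ ≤ D' := by
      interval_cases i
      · exact le_trans (hD 0 (by norm_num) x) (le_max_of_le_left (le_max_left _ _))
      · exact le_trans (hD 1 (by norm_num) x) (le_max_of_le_left (le_max_right _ _))
      · exact le_trans (hD 2 (by norm_num) x) (le_max_right _ _)
    have : D' ≤ max D' 0 * (1 + ‖x‖ ^ (1:ℝ)) := by
      have h2 : D' ≤ max D' 0 := le_max_left _ _
      have h3 : (0:ℝ) ≤ max D' 0 := le_max_right _ _
      nlinarith
    linarith
  · refine ⟨2 * max Cf 0, max qf 1, by positivity, le_max_right _ _, fun i hi x => ?_⟩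
    have hkey : 1 + ‖x‖ ^ qf ≤ 2 * (1 + ‖x‖ ^ max qf 1) := by
      have h0 : (0:ℝ) ≤ ‖x‖ ^ max qf 1 := Real.rpow_nonneg (norm_nonneg _) _
      rcases le_or_gt ‖x‖ 1 with h | h
      · have : ‖x‖ ^ qf ≤ 1 := Real.rpow_le_one (norm_nonneg _) h hqf
        linarith
      · have : ‖x‖ ^ qf ≤ ‖x‖ ^ max qf 1 :=
          Real.rpow_le_rpow_of_exponent_le h.le (le_max_left _ _)
        linarith
    calc ‖iteratedFDeriv ℝ i f x‖ ≤ Cf * (1 + ‖x‖ ^ qf) := hgrowth i hi x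
      _ ≤ max Cf 0 * (1 + ‖x‖ ^ qf) := by
          have : (0:ℝ) ≤ 1 + ‖x‖ ^ qf := by positivity
          exact mul_le_mul_of_nonneg_right (le_max_left _ _) this
      _ ≤ max Cf 0 * (2 * (1 + ‖x‖ ^ max qf 1)) := by
          have h0 : (0:ℝ) ≤ max Cf 0 := le_max_right _ _
          nlinarith
      _ = 2 * max Cf 0 * (1 + ‖x‖ ^ max qf 1) := by ring

lemma aux_taylor {f : E → ℝ} (hf : ContDiff ℝ 2 f) (x z : E) {M : ℝ}
    (hM : ∀ y ∈ segment ℝ x (x + z), ‖iteratedFDeriv ℝ 2 f y‖ ≤ M) :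
    |f (x + z) - f x - fderiv ℝ f x z| ≤ M * ‖z‖ ^ 2 := by
  set L := fderiv ℝ f x with hL
  set g : E → ℝ := fun y => f y - L y with hg
  have hdiff : Differentiable ℝ f := hf.differentiable (by norm_num)
  have hF : ContDiff ℝ 1 (fderiv ℝ f) := hf.fderiv_right (by norm_num)
  have hseg : Convex ℝ (segment ℝ x (x + z)) := convex_segment _ _
  have hM0 : 0 ≤ M := le_trans (norm_nonneg _) (hM x (left_mem_segment ℝ _ _))
  have hder2 : ∀ y, ‖fderiv ℝ (fderiv ℝ f) y‖ = ‖iteratedFDeriv ℝ 2 f y‖ := by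
    intro y
    rw [← norm_iteratedFDeriv_fderiv (n := 1), ← norm_iteratedFDeriv_fderiv (n := 0),
      norm_iteratedFDeriv_zero]
  have hstep1 : ∀ y ∈ segment ℝ x (x + z), ‖fderiv ℝ f y - L‖ ≤ M * ‖z‖ := by
    intro y hy
    have hle : ‖fderiv ℝ f y - L‖ ≤ M * ‖y - x‖ :=
      hseg.norm_image_sub_le_of_norm_fderiv_le
        (fun w _ => hF.differentiable (by norm_num) w)
        (fun w hw => by rw [hder2 w]; exact hM w hw)
        (left_mem_segment ℝ _ _) hy
    have hyx : ‖y - x‖ ≤ ‖z‖ := by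
      obtain ⟨a, b, ha, hb, hab, rfl⟩ := hy
      have heq : a • x + b • (x + z) - x = b • z := by
        have hx : a • x + b • x = x := by rw [← add_smul, hab, one_smul]
        rw [smul_add, ← add_assoc, hx]; abel
      rw [heq, norm_smul, Real.norm_of_nonneg hb]
      nlinarith [norm_nonneg z]
    calc ‖fderiv ℝ f y - L‖ ≤ M * ‖y - x‖ := hle
      _ ≤ M * ‖z‖ := by nlinarith [norm_nonneg (y - x)]
  have hgd : ∀ w, DifferentiableAt ℝ g w := fun w =>
    (hdiff w).sub (L.differentiableAt)
  have hgder : ∀ w, fderiv ℝ g w = fderiv ℝ f w - L := by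
    intro w
    rw [hg]
    rw [fderiv_fun_sub (hdiff w) L.differentiableAt, L.fderiv]
  have hkey : ‖g (x + z) - g x‖ ≤ (M * ‖z‖) * ‖(x + z) - x‖ :=
    hseg.norm_image_sub_le_of_norm_fderiv_le (fun w _ => hgd w)
      (fun w hw => by rw [hgder w]; exact hstep1 w hw)
      (left_mem_segment ℝ _ _) (right_mem_segment ℝ _ _)
  have hxz : (x + z) - x = z := add_sub_cancel_left x z
  have : g (x + z) - g x = f (x + z) - f x - L z := by
    simp only [hg]
    have : L (x + z) - L x = L z := by rw [← map_sub, hxz]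
    linarith [this]
  rw [← this]
  calc |g (x + z) - g x| ≤ (M * ‖z‖) * ‖(x + z) - x‖ := hkey
    _ = M * ‖z‖ ^ 2 := by rw [hxz]; ring

lemma aux_segment_norm {x w y : E} (hy : y ∈ segment ℝ x w) : ‖y‖ ≤ max ‖x‖ ‖w‖ := by
  obtain ⟨a, b, ha, hb, hab, rfl⟩ := hy
  calc ‖a • x + b • w‖ ≤ ‖a • x‖ + ‖b • w‖ := norm_add_le _ _
    _ = a * ‖x‖ + b * ‖w‖ := by
        rw [norm_smul, norm_smul, Real.norm_of_nonneg ha, Real.norm_of_nonneg hb]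
    _ ≤ a * max ‖x‖ ‖w‖ + b * max ‖x‖ ‖w‖ := by
        gcongr
        · exact le_max_left _ _
        · exact le_max_right _ _
    _ = max ‖x‖ ‖w‖ := by rw [← add_mul, hab, one_mul]

end Aux

/-- The path space `C([0,T],ℝ)` with the uniform norm. -/
abbrev PathC (T : ℝ) := C(↥(Set.Icc (0 : ℝ) T), ℝ)

set_option maxHeartbeats 1000000 in
/-- Weak error bound via second-order Taylor expansion: if `f ∈ C²_p(C([0,T],ℝ),ℝ)` and
`X̃_T - Y_T` is independent of `Y_T`, centered, with `E‖X̃_T-Y_T‖⁴_∞ ≤ K δ²`, and both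
variables have all moments bounded by `Mo`, then `|E(f(Y_T)-f(X̃_T))| ≤ C δ` with `C`
depending only on `f`, `K` and `Mo` (not on `δ`). -/
theorem stmt12 (T : ℝ) (hT : 0 < T)
    {Ω : Type*} [MeasurableSpace Ω] (μ : Measure Ω) [IsProbabilityMeasure μ]
    [MeasurableSpace (PathC T)] [BorelSpace (PathC T)]
    (f : PathC T → ℝ) (hf : ContDiff ℝ 2 f)
    (Cf qf : ℝ)
    (hgrowth : ∀ i : ℕ, i ≤ 2 → ∀ x : PathC T,
      ‖iteratedFDeriv ℝ i f x‖ ≤ Cf * (1 + ‖x‖ ^ qf))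
    (K : ℝ) (Mo : ℝ → ℝ) :
    ∃ C : ℝ, ∀ δ : ℝ, δ ∈ Set.Ioc (0 : ℝ) 1 →
      ∀ Y Xt : Ω → PathC T, Measurable Y → Measurable Xt →
      (∀ p : ℝ, 1 ≤ p → Integrable (fun ω => ‖Y ω‖ ^ p) μ ∧
        Integrable (fun ω => ‖Xt ω‖ ^ p) μ) →
      (∀ p : ℝ, 1 ≤ p → (∫ ω, ‖Y ω‖ ^ p ∂μ) ≤ Mo p ∧ (∫ ω, ‖Xt ω‖ ^ p ∂μ) ≤ Mo p) →
      IndepFun (fun ω => Xt ω - Y ω) Y μ →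
      (∫ ω, (Xt ω - Y ω) ∂μ) = 0 →
      (∫ ω, ‖Xt ω - Y ω‖ ^ (4 : ℝ) ∂μ) ≤ K * δ ^ 2 →
      |∫ ω, (f (Y ω) - f (Xt ω)) ∂μ| ≤ C * δ := by
  obtain ⟨B, q, hB, hq, hBq⟩ := aux_growth hf hgrowth
  have hq0 : (0:ℝ) ≤ q := by linarith
  refine ⟨Real.sqrt (3 * B ^ 2 * (1 + 2 * |Mo (2 * q)|)) * Real.sqrt |K|, ?_⟩
  intro δ hδ Y Xt hY hXt hInt hMo hIndep hmean h4
  set Z : Ω → PathC T := fun ω => Xt ω - Y ω with hZdef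
  have hZ : Measurable Z := hXt.sub hY
  have hδ0 : (0:ℝ) < δ := hδ.1
  -- basic norms and integrability
  have hZnorm : ∀ ω, ‖Z ω‖ ≤ ‖Y ω‖ + ‖Xt ω‖ := fun ω => by
    simpa [hZdef, add_comm] using norm_sub_le (Xt ω) (Y ω)
  have hYn : Integrable (fun ω => ‖Y ω‖) μ := by
    have := (hInt 1 le_rfl).1
    simpa [Real.rpow_one] using this
  have hXtn : Integrable (fun ω => ‖Xt ω‖) μ := by
    have := (hInt 1 le_rfl).2
    simpa [Real.rpow_one] using this
  have hZint : Integrable Z μ :=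
    Integrable.mono' (hYn.add hXtn) hZ.aestronglyMeasurable
      (Filter.Eventually.of_forall hZnorm)
  -- pointwise bounds from growth
  have hfc : Continuous f := hf.continuous
  have hbound0 : ∀ x : PathC T, |f x| ≤ B * (1 + ‖x‖ ^ q) := fun x => by
    have := hBq 0 (by norm_num) x
    rwa [norm_iteratedFDeriv_zero, Real.norm_eq_abs] at this
  have hbound1 : ∀ x : PathC T, ‖fderiv ℝ f x‖ ≤ B * (1 + ‖x‖ ^ q) := fun x => by
    have := hBq 1 (by norm_num) x
    rwa [← norm_iteratedFDeriv_fderiv (n := 0), norm_iteratedFDeriv_zero] at this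
  have hIq := hInt q hq
  have hfY : Integrable (fun ω => f (Y ω)) μ :=
    Integrable.mono' (((integrable_const (1:ℝ)).add hIq.1).const_mul B)
      ((hfc.measurable.comp hY).aestronglyMeasurable)
      (Filter.Eventually.of_forall fun ω => by
        simpa [Real.norm_eq_abs] using hbound0 (Y ω))
  have hfXt : Integrable (fun ω => f (Xt ω)) μ :=
    Integrable.mono' (((integrable_const (1:ℝ)).add hIq.2).const_mul B)
      ((hfc.measurable.comp hXt).aestronglyMeasurable)
      (Filter.Eventually.of_forall fun ω => by
        simpa [Real.norm_eq_abs] using hbound0 (Xt ω))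
  -- the linear term
  set L : Ω → ℝ := fun ω => fderiv ℝ f (Y ω) (Z ω) with hLdef
  have hφcont : Continuous (fun p : PathC T × PathC T => fderiv ℝ f p.1 p.2) :=
    isBoundedBilinearMap_apply.continuous.comp
      (((hf.continuous_fderiv (by norm_num)).comp continuous_fst).prodMk continuous_snd)
  have hpair : Measurable fun ω => (Y ω, Z ω) := hY.prodMk hZ
  have hLm : Measurable L := hφcont.measurable.comp hpair
  have hq1 : (1:ℝ) ≤ q + 1 := by linarith
  have hIq1 := hInt (q + 1) hq1
  have hG1int : Integrable (fun ω => 3 * B * (1 + ‖Y ω‖ ^ (q+1) + ‖Xt ω‖ ^ (q+1))) μ :=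
    ((((integrable_const (1:ℝ)).add hIq1.1).add hIq1.2).const_mul (3 * B))
  have hLbound : ∀ ω, ‖L ω‖ ≤ 3 * B * (1 + ‖Y ω‖ ^ (q+1) + ‖Xt ω‖ ^ (q+1)) := by
    intro ω
    set a := ‖Y ω‖ with hadef
    set b := ‖Xt ω‖ with hbdef
    have ha : 0 ≤ a := norm_nonneg _
    have hb : 0 ≤ b := norm_nonneg _
    have h1 : ‖L ω‖ ≤ (B * (1 + a ^ q)) * ‖Z ω‖ :=
      le_trans ((fderiv ℝ f (Y ω)).le_opNorm (Z ω))
        (mul_le_mul_of_nonneg_right (hbound1 (Y ω)) (norm_nonneg _))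
    have h2 : ‖Z ω‖ ≤ a + b := hZnorm ω
    have haq : (0:ℝ) ≤ a ^ q := Real.rpow_nonneg ha _
    have h3 : ‖L ω‖ ≤ B * ((1 + a ^ q) * (a + b)) := by
      calc ‖L ω‖ ≤ (B * (1 + a ^ q)) * ‖Z ω‖ := h1
        _ ≤ (B * (1 + a ^ q)) * (a + b) := by
            have : (0:ℝ) ≤ B * (1 + a ^ q) := by positivity
            nlinarith
        _ = B * ((1 + a ^ q) * (a + b)) := by ring
    have h4a : a ≤ 1 + a ^ (q+1) := aux_self_le ha hq1
    have h4b : b ≤ 1 + b ^ (q+1) := aux_self_le hb hq1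
    have h5 : a ^ q * b ≤ a ^ (q+1) + b ^ (q+1) := aux_prod_le ha hb hq0
    have h6 : a ^ q * a = a ^ (q+1) := by
      rw [Real.rpow_add' ha (by linarith), Real.rpow_one]
    have e2 : (1 + a ^ q) * (a + b) ≤ 3 * (1 + a ^ (q+1) + b ^ (q+1)) := by nlinarith
    calc ‖L ω‖ ≤ B * ((1 + a ^ q) * (a + b)) := h3
      _ ≤ B * (3 * (1 + a ^ (q+1) + b ^ (q+1))) := mul_le_mul_of_nonneg_left e2 hB
      _ = 3 * B * (1 + a ^ (q+1) + b ^ (q+1)) := by ring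
  have hLint : Integrable L μ :=
    Integrable.mono' hG1int hLm.aestronglyMeasurable (Filter.Eventually.of_forall hLbound)
  -- F and G for Cauchy-Schwarz
  set F : Ω → ℝ := fun ω => B * (1 + ‖Y ω‖ ^ q + ‖Xt ω‖ ^ q) with hFdef
  set G : Ω → ℝ := fun ω => ‖Z ω‖ ^ (2:ℝ) with hGdef
  have hF0 : ∀ ω, 0 ≤ F ω := fun ω =>
    mul_nonneg hB (by positivity)
  have hG0 : ∀ ω, 0 ≤ G ω := fun ω => Real.rpow_nonneg (norm_nonneg _) _
  have hrpm : ∀ r : ℝ, 0 ≤ r → Measurable fun x : ℝ => x ^ r := fun r hr =>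
    (Real.continuous_rpow_const hr).measurable
  have hFm : Measurable F :=
    ((measurable_const.add ((hrpm q hq0).comp hY.norm)).add
      ((hrpm q hq0).comp hXt.norm)).const_mul B
  have hGm : Measurable G := (hrpm 2 (by norm_num)).comp hZ.norm
  have h2q : (1:ℝ) ≤ 2 * q := by linarith
  have hI2q := hInt (2*q) h2q
  have hsq : ∀ x : ℝ, 0 ≤ x → (x ^ q) ^ 2 = x ^ (2*q) := fun x hx => by
    rw [sq, ← Real.rpow_add' hx (by linarith), two_mul]
  have hF2bound : ∀ ω, ‖F ω ^ 2‖ ≤ 3 * B^2 * (1 + ‖Y ω‖ ^ (2*q) + ‖Xt ω‖ ^ (2*q)) := by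
    intro ω
    set a := ‖Y ω‖
    set b := ‖Xt ω‖
    have ha : 0 ≤ a := norm_nonneg _
    have hb : 0 ≤ b := norm_nonneg _
    rw [Real.norm_eq_abs, abs_of_nonneg (sq_nonneg _)]
    have e1 := hsq a ha
    have e2 := hsq b hb
    have h1 : (0:ℝ) ≤ a ^ q := Real.rpow_nonneg ha _
    have h2 : (0:ℝ) ≤ b ^ q := Real.rpow_nonneg hb _
    have hkey : (1 + a ^ q + b ^ q) ^ 2 ≤ 3 * (1 + a ^ (2*q) + b ^ (2*q)) := by
      nlinarith [sq_nonneg (1 - a ^ q), sq_nonneg (1 - b ^ q), sq_nonneg (a ^ q - b ^ q)]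
    have hBB : (0:ℝ) ≤ B ^ 2 := sq_nonneg B
    calc F ω ^ 2 = B ^ 2 * (1 + a ^ q + b ^ q) ^ 2 := by rw [hFdef]; ring
      _ ≤ B ^ 2 * (3 * (1 + a ^ (2*q) + b ^ (2*q))) := mul_le_mul_of_nonneg_left hkey hBB
      _ = 3 * B ^ 2 * (1 + a ^ (2*q) + b ^ (2*q)) := by ring
  have hG2i : Integrable (fun ω => 3 * B^2 * (1 + ‖Y ω‖ ^ (2*q) + ‖Xt ω‖ ^ (2*q))) μ :=
    (((integrable_const (1:ℝ)).add hI2q.1).add hI2q.2).const_mul _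
  have hF2int : Integrable (fun ω => F ω ^ 2) μ :=
    Integrable.mono' hG2i (hFm.pow_const 2).aestronglyMeasurable
      (Filter.Eventually.of_forall hF2bound)
  have hMemF : MemLp F 2 μ := (memLp_two_iff_integrable_sq hFm.aestronglyMeasurable).2 hF2int
  have hGsq : ∀ ω, G ω ^ 2 = ‖Z ω‖ ^ (4:ℝ) := fun ω => by
    rw [hGdef]
    show (‖Z ω‖ ^ (2:ℝ)) ^ 2 = ‖Z ω‖ ^ (4:ℝ)
    rw [sq, ← Real.rpow_add' (norm_nonneg _) (by norm_num)]
    norm_num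
  have hI4 := hInt 4 (by norm_num)
  have hnat4 : ∀ x : ℝ, x ^ (4:ℝ) = x ^ (4:ℕ) := fun x => by
    rw [show (4:ℝ) = ((4:ℕ):ℝ) by norm_num, Real.rpow_natCast]
  have hZ4bound : ∀ ω, |(‖Z ω‖ ^ (4:ℝ))| ≤ 8 * (‖Y ω‖ ^ (4:ℝ) + ‖Xt ω‖ ^ (4:ℝ)) := by
    intro ω
    set a := ‖Y ω‖
    set b := ‖Xt ω‖
    have ha : 0 ≤ a := norm_nonneg _
    have hb : 0 ≤ b := norm_nonneg _
    rw [abs_of_nonneg (Real.rpow_nonneg (norm_nonneg _) _), hnat4, hnat4, hnat4]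
    have hz : ‖Z ω‖ ≤ a + b := hZnorm ω
    have h1 : ‖Z ω‖ ^ (4:ℕ) ≤ (a + b) ^ (4:ℕ) :=
      pow_le_pow_left₀ (norm_nonneg _) hz 4
    nlinarith [sq_nonneg (a - b), sq_nonneg (a + b), sq_nonneg (a*a - b*b), sq_nonneg (a*a + b*b), mul_nonneg ha hb]
  have hZ4m : Measurable fun ω => ‖Z ω‖ ^ (4:ℝ) := (hrpm 4 (by norm_num)).comp hZ.norm
  have hZ4int : Integrable (fun ω => ‖Z ω‖ ^ (4:ℝ)) μ :=
    Integrable.mono' ((hI4.1.add hI4.2).const_mul 8) hZ4m.aestronglyMeasurable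
      (Filter.Eventually.of_forall fun ω => by
        simpa [Real.norm_eq_abs] using hZ4bound ω)
  have hG2int : Integrable (fun ω => G ω ^ 2) μ := by
    have : (fun ω => G ω ^ 2) = fun ω => ‖Z ω‖ ^ (4:ℝ) := funext hGsq
    rw [this]; exact hZ4int
  have hMemG : MemLp G 2 μ := (memLp_two_iff_integrable_sq hGm.aestronglyMeasurable).2 hG2int
  -- Taylor estimate pointwise
  have hTay : ∀ ω, |f (Xt ω) - f (Y ω) - L ω| ≤ F ω * G ω := by
    intro ω
    have hXtY : Y ω + Z ω = Xt ω := by simp [hZdef]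
    have hMseg : ∀ y ∈ segment ℝ (Y ω) (Y ω + Z ω), ‖iteratedFDeriv ℝ 2 f y‖ ≤ F ω := by
      intro y hy
      have hyn : ‖y‖ ≤ max ‖Y ω‖ ‖Xt ω‖ := by
        have := aux_segment_norm hy
        rwa [hXtY] at this
      have hyq : ‖y‖ ^ q ≤ ‖Y ω‖ ^ q + ‖Xt ω‖ ^ q := by
        have h1 : ‖y‖ ^ q ≤ (max ‖Y ω‖ ‖Xt ω‖) ^ q :=
          Real.rpow_le_rpow (norm_nonneg _) hyn hq0
        rcases max_cases ‖Y ω‖ ‖Xt ω‖ with ⟨hm, _⟩ | ⟨hm, _⟩ <;> rw [hm] at h1 <;>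
          nlinarith [Real.rpow_nonneg (norm_nonneg (Y ω)) q,
            Real.rpow_nonneg (norm_nonneg (Xt ω)) q]
      calc ‖iteratedFDeriv ℝ 2 f y‖ ≤ B * (1 + ‖y‖ ^ q) := hBq 2 le_rfl y
        _ ≤ F ω := by simp only [hFdef]; nlinarith
    have htl := aux_taylor hf (Y ω) (Z ω) hMseg
    rw [hXtY] at htl
    calc |f (Xt ω) - f (Y ω) - L ω| ≤ F ω * ‖Z ω‖ ^ 2 := htl
      _ = F ω * G ω := by
          have h2 : ‖Z ω‖ ^ (2:ℝ) = ‖Z ω‖ ^ (2:ℕ) := by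
            rw [← Real.rpow_natCast ‖Z ω‖ 2]
            norm_num
          simp only [hGdef, h2]
  have hRint : Integrable (fun ω => f (Xt ω) - f (Y ω) - L ω) μ := (hfXt.sub hfY).sub hLint
  have hFGint : Integrable (fun ω => F ω * G ω) μ := by
    have h12 : (1:ℝ≥0∞)/1 = 1/2 + 1/2 := by
      rw [ENNReal.div_add_div_same]
      norm_num
      exact (ENNReal.div_self (by norm_num) (by norm_num)).symm
    have h := MemLp.smul (r := 1) hMemG hMemF
    rw [memLp_one_iff_integrable] at h
    exact h
  -- independence: the linear term has zero mean
  haveI : IsProbabilityMeasure (μ.map Y) := Measure.isProbabilityMeasure_map hY.aemeasurable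
  haveI : IsProbabilityMeasure (μ.map Z) := Measure.isProbabilityMeasure_map hZ.aemeasurable
  have hmap : μ.map (fun ω => (Y ω, Z ω)) = (μ.map Y).prod (μ.map Z) :=
    (indepFun_iff_map_prod_eq_prod_map_map hY.aemeasurable hZ.aemeasurable).1 hIndep.symm
  have hφm : AEStronglyMeasurable (fun p : PathC T × PathC T => fderiv ℝ f p.1 p.2)
      (μ.map fun ω => (Y ω, Z ω)) := hφcont.aestronglyMeasurable
  have hint_prod : Integrable (fun p : PathC T × PathC T => fderiv ℝ f p.1 p.2)
      ((μ.map Y).prod (μ.map Z)) := by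
    rw [← hmap, integrable_map_measure hφm hpair.aemeasurable]
    exact hLint
  have hZid : Integrable (fun z : PathC T => z) (μ.map Z) :=
    (integrable_map_measure stronglyMeasurable_id.aestronglyMeasurable hZ.aemeasurable).2 hZint
  have hZmean : ∫ z, z ∂(μ.map Z) = 0 := by
    calc ∫ z, z ∂(μ.map Z) = ∫ ω, Z ω ∂μ :=
          integral_map hZ.aemeasurable stronglyMeasurable_id.aestronglyMeasurable
      _ = 0 := hmean
  have hL0 : ∫ ω, L ω ∂μ = 0 := by
    have h1 : ∫ ω, L ω ∂μ = ∫ p, fderiv ℝ f p.1 p.2 ∂((μ.map Y).prod (μ.map Z)) := by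
      rw [← hmap, integral_map hpair.aemeasurable hφm]
    rw [h1, integral_prod _ hint_prod]
    have hz : ∀ y : PathC T, ∫ z, fderiv ℝ f y z ∂(μ.map Z) = 0 := fun y => by
      have h : ∫ z, fderiv ℝ f y z ∂(μ.map Z) = fderiv ℝ f y (∫ z, z ∂(μ.map Z)) :=
        (fderiv ℝ f y).integral_comp_comm hZid
      rw [hZmean, map_zero] at h
      exact h
    simp [hz]
  -- put everything together
  have key : ∫ ω, (f (Y ω) - f (Xt ω)) ∂μ = -∫ ω, (f (Xt ω) - f (Y ω) - L ω) ∂μ := by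
    have h1 : ∫ ω, (f (Y ω) - f (Xt ω)) ∂μ
        = ∫ ω, (-(f (Xt ω) - f (Y ω) - L ω) + -(L ω)) ∂μ := by
      apply integral_congr_ae
      filter_upwards with ω
      ring
    rw [h1]
    rw [integral_add]
    · rw [integral_neg, integral_neg, hL0]
      ring
    · exact hRint.neg
    · exact hLint.neg
  have hr2 : ∀ x : ℝ, x ^ (2:ℝ) = x ^ (2:ℕ) := fun x => by
    rw [show (2:ℝ) = ((2:ℕ):ℝ) by norm_num, Real.rpow_natCast]
  have hpq2 : Real.HolderConjugate 2 2 := Real.HolderConjugate.two_two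
  have hofReal : ENNReal.ofReal (2:ℝ) = 2 := by
    rw [show (2:ℝ≥0∞) = ENNReal.ofReal (2:ℝ) by norm_num [ENNReal.ofReal]]
  have hCS : ∫ ω, F ω * G ω ∂μ
      ≤ (∫ ω, F ω ^ (2:ℝ) ∂μ) ^ ((1:ℝ)/2) * (∫ ω, G ω ^ (2:ℝ) ∂μ) ^ ((1:ℝ)/2) :=
    integral_mul_le_Lp_mul_Lq_of_nonneg hpq2 (Filter.Eventually.of_forall hF0)
      (Filter.Eventually.of_forall hG0) (hofReal ▸ hMemF) (hofReal ▸ hMemG)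
  have e1 : (∫ ω, F ω ^ (2:ℝ) ∂μ) = ∫ ω, F ω ^ 2 ∂μ := by
    apply integral_congr_ae
    filter_upwards with ω
    rw [hr2]
  have e2 : (∫ ω, G ω ^ (2:ℝ) ∂μ) = ∫ ω, ‖Z ω‖ ^ (4:ℝ) ∂μ := by
    apply integral_congr_ae
    filter_upwards with ω
    rw [hr2, hGsq]
  have hF2val : ∫ ω, F ω ^ 2 ∂μ ≤ 3 * B^2 * (1 + 2 * |Mo (2*q)|) := by
    have h1 : ∫ ω, F ω ^ 2 ∂μ ≤ ∫ ω, 3 * B^2 * (1 + ‖Y ω‖ ^ (2*q) + ‖Xt ω‖ ^ (2*q)) ∂μ :=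
      integral_mono hF2int hG2i (fun ω => by
        have := hF2bound ω
        rwa [Real.norm_eq_abs, abs_of_nonneg (sq_nonneg _)] at this)
    have h2 : ∫ ω, 3 * B^2 * (1 + ‖Y ω‖ ^ (2*q) + ‖Xt ω‖ ^ (2*q)) ∂μ
        = 3 * B^2 * (1 + ∫ ω, ‖Y ω‖ ^ (2*q) ∂μ + ∫ ω, ‖Xt ω‖ ^ (2*q) ∂μ) := by
      rw [integral_const_mul]
      rw [integral_add]
      rotate_left
      · exact (integrable_const (1:ℝ)).add hI2q.1
      · exact hI2q.2
      rw [integral_add]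
      rotate_left
      · exact integrable_const _
      · exact hI2q.1
      simp
    have h3 : ∫ ω, ‖Y ω‖ ^ (2*q) ∂μ ≤ |Mo (2*q)| := (hMo (2*q) h2q).1.trans (le_abs_self _)
    have h4' : ∫ ω, ‖Xt ω‖ ^ (2*q) ∂μ ≤ |Mo (2*q)| := (hMo (2*q) h2q).2.trans (le_abs_self _)
    have hBB : (0:ℝ) ≤ B^2 := sq_nonneg B
    rw [h2] at h1
    nlinarith
  have hintF2nonneg : 0 ≤ ∫ ω, F ω ^ 2 ∂μ := integral_nonneg fun ω => sq_nonneg _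
  have hZ4nonneg : 0 ≤ ∫ ω, ‖Z ω‖ ^ (4:ℝ) ∂μ :=
    integral_nonneg fun ω => Real.rpow_nonneg (norm_nonneg _) _
  have hK' : ∫ ω, ‖Z ω‖ ^ (4:ℝ) ∂μ ≤ |K| * δ^2 := by
    refine h4.trans ?_
    have : K ≤ |K| := le_abs_self K
    nlinarith [sq_nonneg δ]
  have b1 : (∫ ω, F ω ^ (2:ℝ) ∂μ) ^ ((1:ℝ)/2)
      ≤ Real.sqrt (3 * B^2 * (1 + 2 * |Mo (2*q)|)) := by
    rw [e1, Real.sqrt_eq_rpow]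
    exact Real.rpow_le_rpow hintF2nonneg hF2val (by norm_num)
  have b2 : (∫ ω, G ω ^ (2:ℝ) ∂μ) ^ ((1:ℝ)/2) ≤ Real.sqrt |K| * δ := by
    rw [e2]
    have h1 : (∫ ω, ‖Z ω‖ ^ (4:ℝ) ∂μ) ^ ((1:ℝ)/2) ≤ (|K| * δ^2) ^ ((1:ℝ)/2) :=
      Real.rpow_le_rpow hZ4nonneg hK' (by norm_num)
    have h2 : (|K| * δ^2) ^ ((1:ℝ)/2) = Real.sqrt |K| * δ := by
      rw [← Real.sqrt_eq_rpow, Real.sqrt_mul (abs_nonneg K), Real.sqrt_sq hδ0.le]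
    rw [← h2]
    exact h1
  have hrpnn : 0 ≤ (∫ ω, G ω ^ (2:ℝ) ∂μ) ^ ((1:ℝ)/2) := by
    rw [e2]
    exact Real.rpow_nonneg hZ4nonneg _
  rw [key, abs_neg]
  calc |∫ ω, (f (Xt ω) - f (Y ω) - L ω) ∂μ|
      ≤ ∫ ω, |f (Xt ω) - f (Y ω) - L ω| ∂μ := by
        simpa [Real.norm_eq_abs] using norm_integral_le_integral_norm
          (fun ω => f (Xt ω) - f (Y ω) - L ω) (μ := μ)
    _ ≤ ∫ ω, F ω * G ω ∂μ := integral_mono hRint.abs hFGint (fun ω => hTay ω)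
    _ ≤ (∫ ω, F ω ^ (2:ℝ) ∂μ) ^ ((1:ℝ)/2) * (∫ ω, G ω ^ (2:ℝ) ∂μ) ^ ((1:ℝ)/2) := hCS
    _ ≤ Real.sqrt (3 * B^2 * (1 + 2 * |Mo (2*q)|)) * (Real.sqrt |K| * δ) := by
        apply mul_le_mul b1 b2 hrpnn (Real.sqrt_nonneg _)
    _ = Real.sqrt (3 * B^2 * (1 + 2 * |Mo (2*q)|)) * Real.sqrt |K| * δ := by ring
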